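/- Let M = ρ(F_{q^n}) ⊆ End_{F_q}(F_{q^n}) be the image of the left-regular representation of the field F_{q^n}. Then the normalizer N(M) = {U ∈ GL : U⁻¹MU = M} of M in the group of invertible F_q-linear endomorphisms of F_{q^n} has exactly n(q^n − 1) elements. -/

import Mathlib

section Aux

variable (K L : Type*) [Field K] [Field L] [Algebra K L]

local notation "ρ" => Algebra.lmul K L

lemma lmul_inj : Function.Injective (ρ) := Algebra.lmul_injective

@[simp] lemma lmul_app (x y : L) : (ρ) x y = x * y := rfl

/-- The unit of `End K L` given by `x ↦ ω * τ x`. -/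
def unitOfPair (ω : Lˣ) (τ : L ≃ₐ[K] L) : (Module.End K L)ˣ where
  val := (ρ) ω * τ.toLinearMap
  inv := τ.symm.toLinearMap * (ρ) ↑ω⁻¹
  val_inv := by
    ext x
    simp [Module.End.mul_apply]
  inv_val := by
    ext x
    simp [Module.End.mul_apply]

lemma unitOfPair_conj (ω : Lˣ) (τ : L ≃ₐ[K] L) (x : L) :
    (↑(unitOfPair K L ω τ)⁻¹ : Module.End K L) * (ρ) x * ↑(unitOfPair K L ω τ) =
      (ρ) (τ.symm x) := by
  ext y
  simp only [unitOfPair, Units.inv_mk, Module.End.mul_apply, lmul_app,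
    AlgEquiv.toLinearMap_apply]
  rw [show (↑ω⁻¹ : L) * (x * (↑ω * τ y)) = (↑ω⁻¹ * ↑ω) * (x * τ y) by ring]
  rw [Units.inv_mul, one_mul, map_mul, AlgEquiv.symm_apply_apply]

lemma unitOfPair_mem (ω : Lˣ) (τ : L ≃ₐ[K] L) :
    (fun f => (↑(unitOfPair K L ω τ)⁻¹ : Module.End K L) * f * ↑(unitOfPair K L ω τ)) ''
      Set.range (ρ) = Set.range (ρ) := by
  ext f
  constructor
  · rintro ⟨g, ⟨x, rfl⟩, rfl⟩
    exact ⟨τ.symm x, (unitOfPair_conj K L ω τ x).symm⟩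
  · rintro ⟨x, rfl⟩
    refine ⟨(ρ) (τ x), ⟨τ x, rfl⟩, ?_⟩
    dsimp only
    rw [unitOfPair_conj, AlgEquiv.symm_apply_apply]

end Aux

theorem card_normalizer_division_torus (q n : ℕ) (K L : Type*) [Field K] [Fintype K]
    [Field L] [Fintype L] [Algebra K L] (hq : Fintype.card K = q)
    (hn : Module.finrank K L = n) :
    Nat.card {U : (Module.End K L)ˣ //
        (fun f => (↑(U⁻¹) : Module.End K L) * f * (↑U : Module.End K L)) ''
          Set.range (Algebra.lmul K L) = Set.range (Algebra.lmul K L)} =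
      n * (q ^ n - 1) := by
  classical
  set ρ := Algebra.lmul K L with hρ
  set N := {U : (Module.End K L)ˣ //
      (fun f => (↑(U⁻¹) : Module.End K L) * f * (↑U : Module.End K L)) ''
        Set.range ρ = Set.range ρ} with hN
  have hinj : Function.Injective ρ := lmul_inj K L
  -- the map from pairs to the normalizer
  let F : Lˣ × (L ≃ₐ[K] L) → N := fun p => ⟨unitOfPair K L p.1 p.2, unitOfPair_mem K L p.1 p.2⟩
  have hF : Function.Bijective F := by
    constructor
    · rintro ⟨ω, τ⟩ ⟨ω', τ'⟩ h
      have h' : (unitOfPair K L ω τ : Module.End K L) = unitOfPair K L ω' τ' := by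
        exact congrArg (fun x => ((x : N) : (Module.End K L)ˣ).val) h
      have key : ∀ y, (ω : L) * τ y = (ω' : L) * τ' y := fun y => by
        simpa [unitOfPair, Module.End.mul_apply] using LinearMap.congr_fun h' y
      have hω : (ω : L) = ω' := by simpa using key 1
      have hτ : τ = τ' := by
        ext y
        have := key y
        rw [hω] at this
        exact mul_left_cancel₀ (Units.ne_zero ω') this
      simp [Prod.ext_iff, Units.ext_iff, hω, hτ]
    · rintro ⟨U, hU⟩
      -- ω = U 1 is nonzero
      have hω0 : (U : Module.End K L) 1 ≠ 0 := fun h => by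
        have : ((U⁻¹ : (Module.End K L)ˣ) : Module.End K L) ((U : Module.End K L) 1) = 1 := by
          rw [← Module.End.mul_apply, Units.inv_mul]; rfl
        rw [h, map_zero] at this
        exact zero_ne_one this
      set ω : L := (U : Module.End K L) 1 with hωdef
      -- choose σ
      have hex : ∀ x : L, ∃ y : L, ρ y =
          (↑(U⁻¹) : Module.End K L) * ρ x * (U : Module.End K L) := by
        intro x
        have hmem : (↑(U⁻¹) : Module.End K L) * ρ x * (U : Module.End K L) ∈ Set.range ρ := by
          rw [← hU]
          exact ⟨ρ x, ⟨x, rfl⟩, rfl⟩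
        obtain ⟨y, hy⟩ := hmem
        exact ⟨y, hy⟩
      choose σ hσ using hex
      have hconj : ∀ x : L, (U : Module.End K L) * ρ (σ x) = ρ x * (U : Module.End K L) := by
        intro x
        rw [hσ x, ← mul_assoc, ← mul_assoc, Units.mul_inv, one_mul]
      have hval : ∀ x : L, (U : Module.End K L) (σ x) = x * ω := by
        intro x
        have := LinearMap.congr_fun (hconj x) 1
        rw [hωdef]
        simpa [Module.End.mul_apply, hρ] using this
      -- σ is injective since U is and x ↦ x * ω is
      have hUinj : Function.Injective (U : Module.End K L) := by
        intro a b h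
        have : ((U⁻¹ : (Module.End K L)ˣ) : Module.End K L) ((U : Module.End K L) a) =
            ((U⁻¹ : (Module.End K L)ˣ) : Module.End K L) ((U : Module.End K L) b) := by rw [h]
        simpa [← Module.End.mul_apply, Units.inv_mul] using this
      -- σ is a ring hom
      have hcmul : ∀ f g : Module.End K L,
          (↑(U⁻¹) : Module.End K L) * (f * g) * ↑U =
            ((↑(U⁻¹) : Module.End K L) * f * ↑U) * ((↑(U⁻¹) : Module.End K L) * g * ↑U) := by
        intro f g
        simp [mul_assoc, Units.mul_inv_cancel_left, Units.inv_mul_cancel_left]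
      have hσ_one : σ 1 = 1 := by
        apply hinj
        rw [hσ 1, map_one, mul_one, Units.inv_mul]
      have hσ_mul : ∀ x y : L, σ (x * y) = σ x * σ y := by
        intro x y
        apply hinj
        rw [map_mul, hσ x, hσ y, hσ (x * y), map_mul, hcmul]
      have hσ_add : ∀ x y : L, σ (x + y) = σ x + σ y := by
        intro x y
        apply hinj
        rw [map_add, hσ x, hσ y, hσ (x + y), map_add]
        noncomm_ring
      have hσ_smul : ∀ (c : K) (x : L), σ (c • x) = c • σ x := by
        intro c x
        apply hinj
        rw [map_smul, hσ x, hσ (c • x), map_smul]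
        simp [smul_mul_assoc, mul_smul_comm]
      let σL : L →ₗ[K] L := { toFun := σ, map_add' := hσ_add, map_smul' := hσ_smul }
      let σA : L →ₐ[K] L := AlgHom.ofLinearMap σL hσ_one hσ_mul
      have hσbij : Function.Bijective σA :=
        Finite.injective_iff_bijective.mp (RingHom.injective (σA : L →+* L))
      let τ : L ≃ₐ[K] L := AlgEquiv.ofBijective σA hσbij
      refine ⟨⟨Units.mk0 ω hω0, τ.symm⟩, ?_⟩
      apply Subtype.ext
      apply Units.ext
      ext y
      have h1 : σ (τ.symm y) = y := AlgEquiv.apply_symm_apply τ y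
      have h2 := hval (τ.symm y)
      rw [h1] at h2
      simp only [F, unitOfPair, Module.End.mul_apply, Units.val_mk0,
        AlgEquiv.toLinearMap_apply, lmul_app]
      rw [h2, mul_comm]
  rw [Nat.card_eq_of_bijective F hF |>.symm] at *
  rw [Nat.card_prod, Nat.card_eq_fintype_card, Nat.card_eq_fintype_card]
  rw [Fintype.card_units, ← Nat.card_eq_fintype_card (α := L ≃ₐ[K] L),
    IsGalois.card_aut_eq_finrank K L, hn,
    Module.card_eq_pow_finrank (K := K) (V := L), hq, hn, mul_comm]
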